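/- Let φ(y) = ρ(y,ȳ)/dist(x̄, F⁻¹(y)) for y ≠ ȳ and φ(ȳ) = 0, and set S = liminf_{y→ȳ, y∉F(x̄)} ρ(y,ȳ)·sup_{v≠y} (φ(y)−φ(v))/ρ(y,v). If Y is complete and y ↦ dist(x̄, F⁻¹(y)) is upper semicontinuous near ȳ, then S/2 ≤ lopen F(x̄,ȳ) ≤ S. -/

import Mathlib

open Metric Set Filter Topology
open scoped ENNReal NNReal

noncomputable section

/-- The image of a set under a set-valued mapping. -/
def SVImage {X Y : Type*} (F : X → Set Y) (s : Set X) : Set Y := ⋃ x ∈ s, F x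

/-- The modulus of openness (openness with a linear rate at a point). -/
def lopenMod {X Y : Type*} [PseudoMetricSpace X] [PseudoMetricSpace Y]
    (F : X → Set Y) (xb : X) (yb : Y) : ℝ≥0∞ :=
  sSup (ENNReal.ofReal '' {c : ℝ | 0 < c ∧ ∃ ε > (0:ℝ), ∀ t ∈ Ioo (0:ℝ) ε,
    closedBall yb (c * t) ⊆ SVImage F (closedBall xb t)})

/-- The modulus of surjection (openness with a linear rate around a point). -/
def surMod {X Y : Type*} [PseudoMetricSpace X] [PseudoMetricSpace Y]
    (F : X → Set Y) (xb : X) (yb : Y) : ℝ≥0∞ :=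
  sSup (ENNReal.ofReal '' {c : ℝ | 0 < c ∧ ∃ ε > (0:ℝ), ∃ U ∈ 𝓝 xb, ∃ V ∈ 𝓝 yb,
    ∀ x ∈ U, ∀ y ∈ V, y ∈ F x → ∀ t ∈ Ioo (0:ℝ) ε,
      closedBall y (c * t) ⊆ SVImage F (closedBall x t)})

/-- The semiregularity modulus. -/
def semiregMod {X Y : Type*} [PseudoMetricSpace X] [PseudoMetricSpace Y]
    (F : X → Set Y) (xb : X) (yb : Y) : ℝ≥0∞ :=
  sInf (ENNReal.ofReal '' {κ : ℝ | 0 < κ ∧ ∃ V ∈ 𝓝 yb, ∀ y ∈ V,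
    EMetric.infEdist xb {x | y ∈ F x} ≤ ENNReal.ofReal (κ * dist yb y)})

/-- The Lipschitz (Aubin) modulus of a set-valued mapping. -/
def lipMod {X Y : Type*} [PseudoMetricSpace X] [PseudoMetricSpace Y]
    (G : X → Set Y) (xb : X) (zb : Y) : ℝ≥0∞ :=
  sInf (ENNReal.ofReal '' {μ : ℝ | 0 < μ ∧ ∃ U ∈ 𝓝 xb, ∃ V ∈ 𝓝 zb,
    ∀ x ∈ U, ∀ x' ∈ U, ∀ z ∈ G x' ∩ V,
      EMetric.infEdist z (G x) ≤ ENNReal.ofReal (μ * dist x x')})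

/-- The calmness modulus of a single-valued mapping. -/
def calmMod {X Y : Type*} [PseudoMetricSpace X] [PseudoMetricSpace Y]
    (f : X → Y) (xb : X) : ℝ≥0∞ :=
  sInf (ENNReal.ofReal '' {μ : ℝ | 0 < μ ∧ ∃ U ∈ 𝓝 xb, ∀ x ∈ U,
    dist (f x) (f xb) ≤ μ * dist x xb})

end

open scoped Classical in
/-- `φ(y) = ρ(y,yb)/dist(xb,F⁻¹(y))` for `y ≠ yb`, `φ(yb) = 0`. -/
noncomputable def phiFun {X Y : Type*} [MetricSpace X] [MetricSpace Y]
    (F : X → Set Y) (xb : X) (yb : Y) (y : Y) : ℝ≥0∞ :=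
  if y = yb then 0
  else ENNReal.ofReal (dist y yb) / EMetric.infEdist xb {x | y ∈ F x}

/-- The slope-type quantity `S` from Theorem 3.1 of the paper. -/
noncomputable def slopeS {X Y : Type*} [MetricSpace X] [MetricSpace Y]
    (F : X → Set Y) (xb : X) (yb : Y) : ℝ≥0∞ :=
  Filter.liminf (fun y : Y => ENNReal.ofReal (dist y yb) *
      ⨆ v : Y, ⨆ _ : v ≠ y,
        (phiFun F xb yb y - phiFun F xb yb v) / ENNReal.ofReal (dist y v))
    (𝓝 yb ⊓ 𝓟 {y : Y | y ∉ F xb})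

section Aux
variable {X Y : Type*} [MetricSpace X] [MetricSpace Y] (F : X → Set Y) (xb : X) (yb : Y)

lemma phiFun_eq (y : Y) : phiFun F xb yb y =
    ENNReal.ofReal (dist y yb) * (EMetric.infEdist xb {x | y ∈ F x})⁻¹ := by
  classical
  by_cases h : y = yb
  · simp [phiFun, h]
  · simp [phiFun, h, div_eq_mul_inv]

lemma lopen_le_liminf (hgraph : yb ∈ F xb) :
    lopenMod F xb yb ≤ Filter.liminf (phiFun F xb yb) (𝓝 yb ⊓ 𝓟 {y : Y | y ∉ F xb}) := by
  rw [lopenMod]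
  apply sSup_le
  rintro b ⟨c, ⟨hc, ε, hε, hcε⟩, rfl⟩
  apply Filter.le_liminf_of_le (by isBoundedDefault)
  rw [Filter.eventually_inf_principal]
  filter_upwards [Metric.ball_mem_nhds yb (mul_pos hc hε)] with y hy hyA
  have hyne : y ≠ yb := fun h => hyA (by rw [h]; exact hgraph)
  have hρ : 0 < dist y yb := dist_pos.2 hyne
  set t : ℝ := dist y yb / c with ht
  have htpos : 0 < t := div_pos hρ hc
  have htε : t < ε := by
    rw [ht, div_lt_iff₀ hc, mul_comm]
    simpa [Metric.mem_ball] using hy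
  have hymem : y ∈ SVImage F (Metric.closedBall xb t) := by
    apply hcε t ⟨htpos, htε⟩
    simp [Metric.mem_closedBall, ht, mul_div_cancel₀ _ hc.ne']
  obtain ⟨x, hx, hyx⟩ : ∃ x, dist xb x ≤ t ∧ y ∈ F x := by
    simpa [SVImage, Metric.mem_closedBall, dist_comm] using hymem
  have hd : EMetric.infEdist xb {x | y ∈ F x} ≤ ENNReal.ofReal t := by
    refine le_trans (EMetric.infEdist_le_edist_of_mem hyx) ?_
    rw [edist_dist]
    exact ENNReal.ofReal_le_ofReal hx
  rw [phiFun_eq]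
  calc ENNReal.ofReal c = ENNReal.ofReal (dist y yb / t) := by
        rw [ht, div_div_cancel₀ hρ.ne']
    _ = ENNReal.ofReal (dist y yb) * (ENNReal.ofReal t)⁻¹ := by
        rw [ENNReal.ofReal_div_of_pos htpos, div_eq_mul_inv]
    _ ≤ _ := by
        gcongr

end Aux
section Aux2
variable {X Y : Type*} [MetricSpace X] [MetricSpace Y] (F : X → Set Y) (xb : X) (yb : Y)

lemma phiFun_self : phiFun F xb yb yb = 0 := by simp [phiFun]

lemma liminf_le_lopen (hgraph : yb ∈ F xb) :
    Filter.liminf (phiFun F xb yb) (𝓝 yb ⊓ 𝓟 {y : Y | y ∉ F xb}) ≤ lopenMod F xb yb := by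
  refine le_of_forall_lt fun b hb => ?_
  obtain ⟨c', hbc', hc'ℓ⟩ := exists_between hb
  have hc'top : c' ≠ ⊤ := hc'ℓ.ne_top
  have hc'0 : c' ≠ 0 := (lt_of_le_of_lt zero_le hbc').ne'
  set c : ℝ := c'.toReal with hcdef
  have hc : 0 < c := ENNReal.toReal_pos hc'0 hc'top
  have hcc' : ENNReal.ofReal c = c' := ENNReal.ofReal_toReal hc'top
  have hev : ∀ᶠ y in 𝓝 yb, y ∉ F xb → c' < phiFun F xb yb y := by
    have := eventually_lt_of_lt_liminf hc'ℓ
    rwa [Filter.eventually_inf_principal] at this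
  obtain ⟨r, hr, hball⟩ := Metric.eventually_nhds_iff.1 hev
  refine lt_of_lt_of_le (hcc' ▸ hbc') (le_sSup ⟨c, ⟨hc, r / c, div_pos hr hc, ?_⟩, rfl⟩)
  rintro t ⟨ht0, htε⟩ y hy
  simp only [Metric.mem_closedBall] at hy
  by_cases hyF : y ∈ F xb
  · exact Set.mem_biUnion (Metric.mem_closedBall_self ht0.le) hyF
  · have hyr : dist y yb < r := by
      calc dist y yb ≤ c * t := hy
        _ < c * (r / c) := by gcongr
        _ = r := by field_simp
    have hφ := hball hyr hyF
    have hyne : y ≠ yb := fun h => hyF (by rw [h]; exact hgraph)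
    have hρ : 0 < dist y yb := dist_pos.2 hyne
    rw [phiFun_eq] at hφ
    set d := EMetric.infEdist xb {x | y ∈ F x} with hd
    have hdtop : d ≠ ⊤ := by
      intro h
      rw [h] at hφ
      simp at hφ
    have hdlt : d < ENNReal.ofReal t := by
      rcases eq_or_ne d 0 with h0 | h0
      · rw [h0]; exact ENNReal.ofReal_pos.2 ht0
      · have h1 : c' * d < ENNReal.ofReal (dist y yb) := by
          rw [← div_eq_mul_inv] at hφ
          exact (ENNReal.lt_div_iff_mul_lt (Or.inl h0) (Or.inl hdtop)).1 hφ
        have h2 : d < ENNReal.ofReal (dist y yb) / c' := by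
          rw [mul_comm] at h1
          exact (ENNReal.lt_div_iff_mul_lt (Or.inl hc'0) (Or.inl hc'top)).2 h1
        refine h2.trans_le ?_
        rw [← hcc', ← ENNReal.ofReal_div_of_pos hc]
        apply ENNReal.ofReal_le_ofReal
        rw [div_le_iff₀ hc, mul_comm]
        exact hy
    obtain ⟨x, hxF, hxd⟩ := EMetric.infEdist_lt_iff.1 hdlt
    have : dist xb x ≤ t := by
      rw [edist_dist] at hxd
      exact (ENNReal.ofReal_lt_ofReal_iff_of_nonneg dist_nonneg).1 hxd |>.le
    exact Set.mem_biUnion (by simpa [Metric.mem_closedBall, dist_comm] using this) hxF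

lemma liminf_le_slopeS (hgraph : yb ∈ F xb) :
    Filter.liminf (phiFun F xb yb) (𝓝 yb ⊓ 𝓟 {y : Y | y ∉ F xb}) ≤ slopeS F xb yb := by
  have hev : ∀ᶠ y in 𝓝 yb ⊓ 𝓟 {y : Y | y ∉ F xb}, phiFun F xb yb y ≤
      ENNReal.ofReal (dist y yb) * ⨆ v : Y, ⨆ _ : v ≠ y,
        (phiFun F xb yb y - phiFun F xb yb v) / ENNReal.ofReal (dist y v) := by
    rw [Filter.eventually_inf_principal]
    apply Filter.Eventually.of_forall
    intro y hyA
    have hyne : yb ≠ y := fun h => hyA (h ▸ hgraph)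
    have hρ : 0 < dist y yb := dist_pos.2 (Ne.symm hyne)
    have hρ0 : ENNReal.ofReal (dist y yb) ≠ 0 := (ENNReal.ofReal_pos.2 hρ).ne'
    calc phiFun F xb yb y
        = ENNReal.ofReal (dist y yb) *
          ((phiFun F xb yb y - phiFun F xb yb yb) / ENNReal.ofReal (dist y yb)) := by
          rw [phiFun_self, tsub_zero, ENNReal.mul_div_cancel hρ0 ENNReal.ofReal_ne_top]
      _ ≤ _ := by
          gcongr
          exact le_iSup₂_of_le yb hyne (by rw [dist_comm])
  exact Filter.liminf_le_liminf hev
end Aux2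
section Ekeland
variable {Z : Type*} [MetricSpace Z] [CompleteSpace Z]

lemma ekeland_aux (C : Set Z) (hC : IsClosed C) (f : Z → ℝ≥0∞)
    (hlsc : ∀ x ∈ C, ∀ u : ℕ → Z, (∀ n, u n ∈ C) → Filter.Tendsto u Filter.atTop (𝓝 x) →
      f x ≤ Filter.liminf (fun n => f (u n)) Filter.atTop)
    (y₀ : Z) (hy₀ : y₀ ∈ C) (hftop : f y₀ ≠ ⊤) (κ : ℝ≥0∞) (hκ0 : κ ≠ 0) (hκtop : κ ≠ ⊤) :
    ∃ z ∈ C, (f z + κ * edist z y₀ ≤ f y₀) ∧ ∀ v ∈ C, f z ≤ f v + κ * edist z v := by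
  have hstep : ∀ (n : ℕ) (z : Z), z ∈ C → f z ≤ f y₀ → ∃ w,
      w ∈ C ∧ f w + κ * edist w z ≤ f z ∧
      ∀ u ∈ C, f u + κ * edist u z ≤ f z → f w ≤ f u + (2 : ℝ≥0∞)⁻¹ ^ n := by
    intro n z hzC hzf
    set S : Set Z := {u | u ∈ C ∧ f u + κ * edist u z ≤ f z} with hS
    have hzS : z ∈ S := ⟨hzC, by simp⟩
    have hinf_le : sInf (f '' S) ≤ f z := sInf_le ⟨z, hzS, rfl⟩
    have hinf_top : sInf (f '' S) ≠ ⊤ :=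
      ne_top_of_le_ne_top (ne_top_of_le_ne_top hftop hzf) hinf_le
    have hpow : (2 : ℝ≥0∞)⁻¹ ^ n ≠ 0 := pow_ne_zero n (by simp)
    obtain ⟨b, ⟨w, hwS, rfl⟩, hblt⟩ :=
      sInf_lt_iff.1 (ENNReal.lt_add_right hinf_top hpow)
    refine ⟨w, hwS.1, hwS.2, fun u huC huS => ?_⟩
    have h2 : sInf (f '' S) ≤ f u := sInf_le ⟨u, ⟨huC, huS⟩, rfl⟩
    exact hblt.le.trans (by gcongr)
  choose! g hgC hgkey hgmin using hstep
  set x : ℕ → Z := fun n => Nat.rec y₀ (fun n z => g n z) n with hx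
  have hxs : ∀ n, x (n + 1) = g n (x n) := fun n => rfl
  have inv : ∀ n, x n ∈ C ∧ f (x n) ≤ f y₀ := by
    intro n
    induction n with
    | zero => exact ⟨hy₀, le_rfl⟩
    | succ n ih =>
        have h1 := hgC n (x n) ih.1 ih.2
        have h2 := hgkey n (x n) ih.1 ih.2
        rw [← hxs n] at h1 h2
        exact ⟨h1, le_trans (le_trans le_self_add h2) ih.2⟩
  have key : ∀ n, f (x (n + 1)) + κ * edist (x (n + 1)) (x n) ≤ f (x n) := by
    intro n; rw [hxs n]; exact hgkey n (x n) (inv n).1 (inv n).2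
  have fanti : ∀ n, f (x (n + 1)) ≤ f (x n) := fun n => le_trans le_self_add (key n)
  have ftop : ∀ n, f (x n) ≠ ⊤ := fun n => ne_top_of_le_ne_top hftop (inv n).2
  have monKey : ∀ n m, n ≤ m → f (x m) + κ * edist (x m) (x n) ≤ f (x n) := by
    intro n m hnm
    induction m, hnm using Nat.le_induction with
    | base => simp
    | succ m hnm ih =>
        calc f (x (m + 1)) + κ * edist (x (m + 1)) (x n)
            ≤ f (x (m + 1)) + (κ * edist (x (m + 1)) (x m) + κ * edist (x m) (x n)) := by
              rw [← mul_add]; gcongr; exact edist_triangle _ _ _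
          _ = (f (x (m + 1)) + κ * edist (x (m + 1)) (x m)) + κ * edist (x m) (x n) := by ring
          _ ≤ f (x m) + κ * edist (x m) (x n) := by gcongr; exact key m
          _ ≤ f (x n) := ih
  -- Cauchy
  have hsum : ∀ N : ℕ, (∑ n ∈ Finset.range N, (f (x n) - f (x (n + 1)))) + f (x N) ≤ f (x 0) := by
    intro N
    induction N with
    | zero => simp
    | succ N ih =>
        rw [Finset.sum_range_succ, add_assoc, tsub_add_cancel_of_le (fanti N)]
        exact ih
  have hedist_le : ∀ n, edist (x n) (x (n + 1)) ≤ (f (x n) - f (x (n + 1))) / κ := by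
    intro n
    have h1 : κ * edist (x (n + 1)) (x n) ≤ f (x n) - f (x (n + 1)) :=
      ENNReal.le_sub_of_add_le_left (ftop (n + 1)) (key n)
    rw [edist_comm, ENNReal.le_div_iff_mul_le (Or.inl hκ0) (Or.inl hκtop), mul_comm]
    exact h1
  have htsum : (∑' n, (f (x n) - f (x (n + 1))) / κ) ≠ ⊤ := by
    have h1 : (∑' n, (f (x n) - f (x (n + 1)))) ≤ f (x 0) := by
      rw [ENNReal.tsum_eq_iSup_nat]
      exact iSup_le fun N => le_trans le_self_add (hsum N)
    have h2 : (∑' n, (f (x n) - f (x (n + 1))) / κ) = (∑' n, (f (x n) - f (x (n + 1)))) * κ⁻¹ := by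
      simp_rw [div_eq_mul_inv, ENNReal.tsum_mul_right]
    rw [h2]
    exact ENNReal.mul_ne_top (ne_top_of_le_ne_top (ftop 0) h1) (ENNReal.inv_ne_top.2 hκ0)
  have hcauchy : CauchySeq x := cauchySeq_of_edist_le_of_tsum_ne_top _ hedist_le htsum
  obtain ⟨z, hz⟩ := cauchySeq_tendsto_of_complete hcauchy
  have hzC : z ∈ C := hC.mem_of_tendsto hz (Filter.Eventually.of_forall fun n => (inv n).1)
  have hfz : f z ≤ Filter.liminf (fun n => f (x n)) Filter.atTop :=
    hlsc z hzC x (fun n => (inv n).1) hz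
  have hfz_le : ∀ n, f z ≤ f (x n) := by
    intro n
    refine hfz.trans (Filter.liminf_le_of_frequently_le ?_)
    apply Filter.Eventually.frequently
    filter_upwards [Filter.eventually_ge_atTop n] with m hm
    clear hfz
    induction m, hm using Nat.le_induction with
    | base => exact le_rfl
    | succ m hnm ih => exact (fanti m).trans ih
  have hdagger : ∀ n, f z + κ * edist z (x n) ≤ f (x n) := by
    intro n
    apply ENNReal.le_of_forall_pos_le_add
    intro ε hε _
    have hb_top : κ * edist z (x n) ≠ ⊤ := by
      refine ENNReal.mul_ne_top hκtop (edist_ne_top _ _)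
    have htend : Filter.Tendsto (fun m => κ * edist (x m) (x n)) Filter.atTop
        (𝓝 (κ * edist z (x n))) :=
      ENNReal.Tendsto.const_mul (hz.edist tendsto_const_nhds) (Or.inr hκtop)
    have hicc := htend.eventually (ENNReal.Icc_mem_nhds hb_top
      (ENNReal.coe_ne_zero.2 hε.ne'))
    obtain ⟨m, hm1, hm2⟩ := (hicc.and (Filter.eventually_ge_atTop n)).exists
    calc f z + κ * edist z (x n)
        ≤ f z + ((κ * edist z (x n) - ε) + ε) := add_le_add le_rfl le_tsub_add
      _ = (f z + (κ * edist z (x n) - ε)) + ε := by ring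
      _ ≤ (f (x m) + κ * edist (x m) (x n)) + ε := by
          gcongr
          · exact hfz_le m
          · exact hm1.1
      _ ≤ f (x n) + ε := by gcongr; exact monKey n m hm2
  refine ⟨z, hzC, by exact hdagger 0, ?_⟩
  by_contra hcon
  push_neg at hcon
  obtain ⟨v, hvC, hv⟩ := hcon
  have hzvtop : κ * edist z v ≠ ⊤ := ENNReal.mul_ne_top hκtop (edist_ne_top _ _)
  have hvS : ∀ n, f v + κ * edist v (x n) ≤ f (x n) := by
    intro n
    refine le_of_lt ?_
    calc f v + κ * edist v (x n)
        ≤ f v + (κ * edist v z + κ * edist z (x n)) := by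
          rw [← mul_add]; gcongr; exact edist_triangle _ _ _
      _ = (f v + κ * edist z v) + κ * edist z (x n) := by rw [edist_comm]; ring
      _ < f z + κ * edist z (x n) :=
          ENNReal.add_lt_add_right (ENNReal.mul_ne_top hκtop (edist_ne_top _ _)) hv
      _ ≤ f (x n) := hdagger n
  have hnm : ∀ n, f z ≤ f v + (2 : ℝ≥0∞)⁻¹ ^ n := by
    intro n
    refine (hfz_le (n + 1)).trans ?_
    rw [hxs n]
    exact hgmin n (x n) (inv n).1 (inv n).2 v hvC (hvS n)
  have htend0 : Filter.Tendsto (fun n : ℕ => f v + (2 : ℝ≥0∞)⁻¹ ^ n)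
      Filter.atTop (𝓝 (f v)) := by
    have h2 := Filter.Tendsto.add (tendsto_const_nhds (x := f v))
      (ENNReal.tendsto_pow_atTop_nhds_zero_of_lt_one (ENNReal.inv_lt_one.2 (by norm_num : (1:ℝ≥0∞) < 2)))
    simpa using h2
  have hfzv : f z ≤ f v := ge_of_tendsto' htend0 hnm
  exact lt_irrefl (f z) (lt_of_le_of_lt (hfzv.trans le_self_add) hv)
end Ekeland
lemma enn_div_div_cancel {a b : ℝ≥0∞} (ha0 : a ≠ 0) (hat : a ≠ ⊤) : a / (a / b) = b := by
  rw [div_eq_mul_inv, ENNReal.inv_div (Or.inr hat) (Or.inr ha0),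
    ENNReal.mul_div_cancel ha0 hat]

section Aux3
variable {X Y : Type*} [MetricSpace X] [MetricSpace Y] (F : X → Set Y) (xb : X) (yb : Y)

lemma phi_seq_lsc {V C : Set Y}
    (hV : UpperSemicontinuousOn (fun y : Y => EMetric.infEdist xb {x | y ∈ F x}) V)
    (hCV : C ⊆ V) :
    ∀ x ∈ C, ∀ u : ℕ → Y, (∀ n, u n ∈ C) → Filter.Tendsto u Filter.atTop (𝓝 x) →
      phiFun F xb yb x ≤ Filter.liminf (fun n => phiFun F xb yb (u n)) Filter.atTop := by
  intro x hxC u huC hu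
  set dd : Y → ℝ≥0∞ := fun y => EMetric.infEdist xb {x | y ∈ F x} with hdd
  have husl : ∀ b, dd x < b → ∀ᶠ n in Filter.atTop, dd (u n) < b := by
    intro b hb
    have h1 : Filter.Tendsto u Filter.atTop (𝓝[V] x) :=
      tendsto_nhdsWithin_iff.2 ⟨hu, Filter.Eventually.of_forall fun n => hCV (huC n)⟩
    exact h1.eventually (hV x (hCV hxC) b hb)
  have hρ : Filter.Tendsto (fun n => ENNReal.ofReal (dist (u n) yb)) Filter.atTop
      (𝓝 (ENNReal.ofReal (dist x yb))) :=
    (ENNReal.continuous_ofReal.tendsto _).comp (hu.dist tendsto_const_nhds)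
  by_contra hcon
  push_neg at hcon
  obtain ⟨c, hlim_c, hc⟩ := exists_between hcon
  rw [phiFun_eq] at hc
  change c < ENNReal.ofReal (dist x yb) * (dd x)⁻¹ at hc
  -- it suffices to prove: eventually c < phi (u n)
  have suff : (∀ᶠ n in Filter.atTop, c ≤ phiFun F xb yb (u n)) → False := by
    intro h
    exact absurd (Filter.le_liminf_of_le (by isBoundedDefault) h) (not_le.2 hlim_c)
  apply suff
  set A : ℝ≥0∞ := ENNReal.ofReal (dist x yb) with hA
  have hctop : c ≠ ⊤ := hc.ne_top
  have hA0 : A ≠ 0 := by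
    intro h
    rw [h, zero_mul] at hc
    simp at hc
  have hAtop : A ≠ ⊤ := ENNReal.ofReal_ne_top
  have hddtop : dd x ≠ ⊤ := by
    intro h
    rw [h] at hc
    simp at hc
  have hApos : 0 < dist x yb := by
    by_contra h
    push_neg at h
    exact hA0 (by simp [hA, ENNReal.ofReal_eq_zero.2 h])
  rcases eq_or_ne (dd x) 0 with hdd0 | hdd0
  · -- dd x = 0 : phi x = ∞ morally
    have hc1top : c + 1 ≠ ⊤ := by simp [hctop]
    have hc10 : c + 1 ≠ 0 := by simp
    set ε' : ℝ≥0∞ := ENNReal.ofReal (dist x yb / 2) / (c + 1) with hε'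
    have hnum0 : ENNReal.ofReal (dist x yb / 2) ≠ 0 :=
      (ENNReal.ofReal_pos.2 (by linarith)).ne'
    have hε'pos : 0 < ε' := ENNReal.div_pos hnum0 hc1top
    filter_upwards [husl ε' (hdd0 ▸ hε'pos),
      hρ.eventually_const_lt (show ENNReal.ofReal (dist x yb / 2) < A by
        rw [hA]; exact ENNReal.ofReal_lt_ofReal_iff_of_nonneg (by linarith) |>.2 (by linarith))]
      with n h1 h2
    have : c + 1 ≤ phiFun F xb yb (u n) := by
      rw [phiFun_eq]
      show c + 1 ≤ ENNReal.ofReal (dist (u n) yb) * (dd (u n))⁻¹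
      calc c + 1 = ENNReal.ofReal (dist x yb / 2) / ε' := by
            rw [hε', enn_div_div_cancel hnum0 ENNReal.ofReal_ne_top]
        _ ≤ ENNReal.ofReal (dist (u n) yb) / ε' := by gcongr
        _ ≤ ENNReal.ofReal (dist (u n) yb) * (dd (u n))⁻¹ := by
            rw [div_eq_mul_inv]; gcongr
    exact le_trans (le_trans le_self_add this) le_rfl
  · -- dd x finite positive
    rcases eq_or_ne c 0 with hc0 | hc0
    · -- just need positivity eventually
      filter_upwards [husl (dd x + 1) (ENNReal.lt_add_right hddtop one_ne_zero),
        hρ.eventually_const_lt (show ENNReal.ofReal (dist x yb / 2) < A by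
          rw [hA]; exact ENNReal.ofReal_lt_ofReal_iff_of_nonneg (by linarith) |>.2 (by linarith))]
        with n h1 h2
      rw [hc0, phiFun_eq]
      exact zero_le
    · obtain ⟨θ, hcθ, hθ⟩ := exists_between hc
      have hθ0 : θ ≠ 0 := (lt_of_le_of_lt zero_le hcθ).ne'
      have hθtop : θ ≠ ⊤ := hθ.ne_top
      have hθ' : θ < A * (dd x)⁻¹ := hθ
      have hAd : θ * dd x < A := by
        rw [← div_eq_mul_inv] at hθ'
        exact (ENNReal.lt_div_iff_mul_lt (Or.inl hdd0) (Or.inl hddtop)).1 hθ'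
      set a₀ : ℝ≥0∞ := θ * dd x with ha₀
      have ha₀0 : a₀ ≠ 0 := mul_ne_zero hθ0 hdd0
      have ha₀top : a₀ ≠ ⊤ := ENNReal.mul_ne_top hθtop hddtop
      set D' : ℝ≥0∞ := a₀ / c with hD'
      have hD'0 : D' ≠ 0 := (ENNReal.div_pos ha₀0 hctop).ne'
      have hD'top : D' ≠ ⊤ := by
        rw [hD']
        exact (ENNReal.div_lt_top ha₀top hc0).ne
      have hdD' : dd x < D' := by
        rw [hD']
        refine (ENNReal.lt_div_iff_mul_lt (Or.inl hc0) (Or.inl hctop)).2 ?_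
        rw [ha₀, mul_comm (dd x) c]
        exact ENNReal.mul_lt_mul_left hdd0 hddtop hcθ
      filter_upwards [husl D' hdD', hρ.eventually_const_lt hAd] with n h1 h2
      calc c = a₀ / D' := by rw [hD', enn_div_div_cancel ha₀0 ha₀top]
        _ = a₀ * D'⁻¹ := div_eq_mul_inv _ _
        _ ≤ ENNReal.ofReal (dist (u n) yb) * (dd (u n))⁻¹ := by
            gcongr
        _ = phiFun F xb yb (u n) := (phiFun_eq F xb yb (u n)).symm
end Aux3
section Main
variable {X Y : Type*} [MetricSpace X] [MetricSpace Y]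

lemma slopeS_le_per_k [CompleteSpace Y] (F : X → Set Y) (xb : X) (yb : Y)
    (hgraph : yb ∈ F xb) {V : Set Y} (hV : V ∈ 𝓝 yb)
    (hVusc : UpperSemicontinuousOn (fun y : Y => EMetric.infEdist xb {x | y ∈ F x}) V)
    (hltop : Filter.liminf (phiFun F xb yb) (𝓝 yb ⊓ 𝓟 {y : Y | y ∉ F xb}) ≠ ⊤)
    (k : ℝ) (hk : 2 < k) (ε : ℝ) (hε : 0 < ε) :
    slopeS F xb yb ≤ ENNReal.ofReal k *
      (Filter.liminf (phiFun F xb yb) (𝓝 yb ⊓ 𝓟 {y : Y | y ∉ F xb}) + ENNReal.ofReal ε) := by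
  classical
  set A : Set Y := {y : Y | y ∉ F xb} with hA
  set L : Filter Y := 𝓝 yb ⊓ 𝓟 A with hL
  set φ : Y → ℝ≥0∞ := phiFun F xb yb with hφ
  set l : ℝ≥0∞ := Filter.liminf φ L with hl
  set bound : ℝ≥0∞ := ENNReal.ofReal k * (l + ENNReal.ofReal ε) with hbound
  set T : Y → ℝ≥0∞ := fun y => ENNReal.ofReal (dist y yb) *
      ⨆ v : Y, ⨆ _ : v ≠ y, (φ y - φ v) / ENNReal.ofReal (dist y v) with hT
  show Filter.liminf T L ≤ bound
  refine Filter.liminf_le_of_frequently_le ?_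
  rw [Filter.Frequently]
  intro hev
  rw [Filter.eventually_inf_principal] at hev
  obtain ⟨r₀, hr₀, hW⟩ := Metric.eventually_nhds_iff.1 (hev.and (eventually_mem_nhds_iff.2 hV))
  -- hW : ∀ y, dist y yb < r₀ → (y ∈ A → ¬ T y ≤ bound) ∧ ...
  set R : ℝ := r₀ / 2 with hR
  have hRpos : 0 < R := by positivity
  set C : Set Y := Metric.closedBall yb R with hC
  have hCV : C ⊆ V := by
    intro y hy
    have h1 : dist y yb < r₀ := lt_of_le_of_lt (Metric.mem_closedBall.1 hy) (by rw [hR]; linarith)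
    exact mem_of_mem_nhds ((hW h1).2)
  set s : ℝ := min (R / 4) (R * (k - 2) / 8) with hs
  have hk2 : (0:ℝ) < k - 2 := by linarith
  have hspos : 0 < s := lt_min (by positivity) (by positivity)
  -- pick a nearly-minimizing point y₀
  have hfreq : ∃ᶠ y in L, φ y < l + ENNReal.ofReal ε :=
    Filter.frequently_lt_of_liminf_lt
      (h := ENNReal.lt_add_right hltop (ENNReal.ofReal_pos.2 hε).ne')
  have h1 : ∀ᶠ y in L, dist y yb < s :=
    Filter.Eventually.filter_mono inf_le_left
      (by filter_upwards [Metric.ball_mem_nhds yb hspos] with y hy using Metric.mem_ball.1 hy)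
  have h2 : ∀ᶠ y in L, y ∈ A :=
    Filter.Eventually.filter_mono inf_le_right (Filter.eventually_principal.2 fun _ hy => hy)
  obtain ⟨y₀, hφy₀, hy₀s, hy₀A⟩ := (hfreq.and_eventually (h1.and h2)).exists
  have hy₀ne : y₀ ≠ yb := fun h => hy₀A (by rw [h]; exact hgraph)
  have hρ₀ : 0 < dist y₀ yb := dist_pos.2 hy₀ne
  set ρ₀ : ℝ := dist y₀ yb with hρ₀def
  have hy₀r : dist y₀ yb < r₀ := by
    have : s < r₀ := lt_of_le_of_lt (min_le_left _ _) (by rw [hR]; linarith)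
    linarith
  have hφy₀top : φ y₀ ≠ ⊤ := hφy₀.ne_top
  rcases eq_or_ne (φ y₀) 0 with hφ0 | hφ0
  · -- then T y₀ = 0
    refine (hW hy₀r).1 hy₀A ?_
    have : T y₀ = 0 := by
      rw [hT]
      simp only [hφ0, zero_tsub, ENNReal.zero_div]
      simp
    rw [this]
    exact zero_le
  · -- Ekeland
    set lam : ℝ := (4 / (k + 2)) * ρ₀ with hlam
    have hmul01 : 0 < 4 / (k + 2) ∧ 4 / (k + 2) < 1 := by
      constructor
      · positivity
      · rw [div_lt_one (by linarith)]; linarith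
    have hlampos : 0 < lam := mul_pos hmul01.1 hρ₀
    have hlamlt : lam < ρ₀ := by
      rw [hlam]
      nth_rewrite 2 [← one_mul ρ₀]
      exact mul_lt_mul_of_pos_right hmul01.2 hρ₀
    set κ : ℝ≥0∞ := φ y₀ / ENNReal.ofReal lam with hκ
    have hκ0 : κ ≠ 0 := (ENNReal.div_pos hφ0 ENNReal.ofReal_ne_top).ne'
    have hκtop : κ ≠ ⊤ := (ENNReal.div_lt_top hφy₀top (ENNReal.ofReal_pos.2 hlampos).ne').ne
    have hκlam : κ * ENNReal.ofReal lam = φ y₀ :=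
      ENNReal.div_mul_cancel (ENNReal.ofReal_pos.2 hlampos).ne' ENNReal.ofReal_ne_top
    have hy₀C : y₀ ∈ C := by
      rw [hC, Metric.mem_closedBall]
      have : s ≤ R / 4 := min_le_left _ _
      linarith
    obtain ⟨z, hzC, hzi, hzii⟩ := ekeland_aux C Metric.isClosed_closedBall φ
      (phi_seq_lsc F xb yb hVusc hCV) y₀ hy₀C hφy₀top κ hκ0 hκtop
    have hφz : φ z ≤ φ y₀ := le_trans le_self_add hzi
    have hφztop : φ z ≠ ⊤ := ne_top_of_le_ne_top hφy₀top hφz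
    have hedz : κ * edist z y₀ ≤ φ y₀ := le_trans le_add_self hzi
    have hdzy₀ : dist z y₀ ≤ lam := by
      rw [← hκlam] at hedz
      have := (ENNReal.mul_le_mul_iff_right hκ0 hκtop).1 hedz
      rw [edist_dist] at this
      exact (ENNReal.ofReal_le_ofReal_iff hlampos.le).1 this
    have hzne : z ≠ yb := by
      intro h
      rw [h] at hdzy₀
      rw [dist_comm] at hdzy₀
      linarith
    have hzA : z ∈ A := by
      intro hzF
      have hdd0 : EMetric.infEdist xb {x | z ∈ F x} = 0 := by
        refine le_antisymm ?_ zero_le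
        have hmem : xb ∈ {x | z ∈ F x} := hzF
        have h6 : EMetric.infEdist xb {x | z ∈ F x} ≤ edist xb xb :=
          EMetric.infEdist_le_edist_of_mem hmem
        simpa using h6
      have : φ z = ⊤ := by
        rw [hφ, phiFun_eq, hdd0]
        simp [ENNReal.mul_top, (ENNReal.ofReal_pos.2 (dist_pos.2 hzne)).ne']
      exact hφztop this
    have hρz : dist z yb ≤ 2 * ρ₀ := by
      calc dist z yb ≤ dist z y₀ + dist y₀ yb := dist_triangle _ _ _
        _ ≤ lam + ρ₀ := by gcongr
        _ ≤ 2 * ρ₀ := by linarith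
    have hzr : dist z yb < r₀ := by
      have hs4 : s ≤ R / 4 := min_le_left _ _
      have h7 : (2 : ℝ) * ρ₀ < 2 * s := by linarith
      linarith
    refine (hW hzr).1 hzA ?_
    -- now the main estimate : T z ≤ bound
    have hzR2 : dist z yb ≤ R / 2 := by
      have hs4 : s ≤ R / 4 := min_le_left _ _
      have : ρ₀ < s := hy₀s
      linarith
    have hsupb : (⨆ v : Y, ⨆ _ : v ≠ z, (φ z - φ v) / ENNReal.ofReal (dist z v)) ≤
        κ + φ y₀ / ENNReal.ofReal (R / 2) := by
      refine iSup₂_le fun v hvz => ?_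
      by_cases hvC : v ∈ C
      · refine le_trans ?_ le_self_add
        have h3 : φ z - φ v ≤ κ * ENNReal.ofReal (dist z v) := by
          rw [tsub_le_iff_right, ← edist_dist, add_comm]
          exact hzii v hvC
        have hD0 : ENNReal.ofReal (dist z v) ≠ 0 :=
          (ENNReal.ofReal_pos.2 (dist_pos.2 (Ne.symm hvz))).ne'
        calc (φ z - φ v) / ENNReal.ofReal (dist z v)
            ≤ κ * ENNReal.ofReal (dist z v) / ENNReal.ofReal (dist z v) := by gcongr
          _ = κ * (ENNReal.ofReal (dist z v) / ENNReal.ofReal (dist z v)) := by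
              rw [mul_div_assoc]
          _ = κ := by rw [ENNReal.div_self hD0 ENNReal.ofReal_ne_top, mul_one]
      · refine le_trans ?_ le_add_self
        have hvfar : R / 2 ≤ dist z v := by
          have h4 : R < dist v yb := by
            by_contra h
            push_neg at h
            exact hvC (Metric.mem_closedBall.2 h)
          have h5 := dist_triangle v z yb
          rw [dist_comm v z] at h5
          linarith
        calc (φ z - φ v) / ENNReal.ofReal (dist z v)
            ≤ φ z / ENNReal.ofReal (R / 2) :=
              ENNReal.div_le_div tsub_le_self (ENNReal.ofReal_le_ofReal hvfar)
          _ ≤ φ y₀ / ENNReal.ofReal (R / 2) := ENNReal.div_le_div hφz le_rfl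
    -- assemble
    have hTz : T z ≤ ENNReal.ofReal (2 * ρ₀) * (κ + φ y₀ / ENNReal.ofReal (R / 2)) := by
      rw [hT]
      exact mul_le_mul' (ENNReal.ofReal_le_ofReal hρz) hsupb
    refine le_trans hTz ?_
    rw [mul_add, hκ]
    have e1 : ENNReal.ofReal (2 * ρ₀) * (φ y₀ / ENNReal.ofReal lam) =
        φ y₀ * ENNReal.ofReal ((k + 2) / 2) := by
      rw [div_eq_mul_inv, show ENNReal.ofReal (2 * ρ₀) * (φ y₀ * (ENNReal.ofReal lam)⁻¹) =
        φ y₀ * (ENNReal.ofReal (2 * ρ₀) * (ENNReal.ofReal lam)⁻¹) by ring,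
        ← div_eq_mul_inv, ← ENNReal.ofReal_div_of_pos hlampos]
      congr 2
      rw [hlam]
      field_simp
      ring_nf
    have e2 : ENNReal.ofReal (2 * ρ₀) * (φ y₀ / ENNReal.ofReal (R / 2)) ≤
        φ y₀ * ENNReal.ofReal ((k - 2) / 2) := by
      rw [div_eq_mul_inv, show ENNReal.ofReal (2 * ρ₀) * (φ y₀ * (ENNReal.ofReal (R/2))⁻¹) =
        φ y₀ * (ENNReal.ofReal (2 * ρ₀) * (ENNReal.ofReal (R/2))⁻¹) by ring,
        ← div_eq_mul_inv, ← ENNReal.ofReal_div_of_pos (by positivity)]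
      refine mul_le_mul_right (ENNReal.ofReal_le_ofReal ?_) _
      rw [div_le_div_iff₀ (by positivity) (by norm_num)]
      have hs8 : s ≤ R * (k - 2) / 8 := min_le_right _ _
      nlinarith
    calc ENNReal.ofReal (2 * ρ₀) * (φ y₀ / ENNReal.ofReal lam) +
          ENNReal.ofReal (2 * ρ₀) * (φ y₀ / ENNReal.ofReal (R / 2))
        ≤ φ y₀ * ENNReal.ofReal ((k + 2) / 2) + φ y₀ * ENNReal.ofReal ((k - 2) / 2) := by
          rw [e1]; gcongr
      _ = φ y₀ * ENNReal.ofReal k := by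
          rw [← mul_add, ← ENNReal.ofReal_add (by positivity) (by linarith)]
          congr 1
          ring
      _ ≤ (l + ENNReal.ofReal ε) * ENNReal.ofReal k := mul_le_mul_left hφy₀.le _
      _ = bound := by rw [hbound, mul_comm]
end Main
theorem slope_estimate_lopen' {X Y : Type*} [MetricSpace X] [MetricSpace Y]
    [CompleteSpace Y] (F : X → Set Y) (xb : X) (yb : Y) (hgraph : yb ∈ F xb)
    (husc : ∃ V ∈ 𝓝 yb, UpperSemicontinuousOn
      (fun y : Y => EMetric.infEdist xb {x | y ∈ F x}) V) :
    slopeS F xb yb / 2 ≤ lopenMod F xb yb ∧ lopenMod F xb yb ≤ slopeS F xb yb := by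
  obtain ⟨V, hV, hVusc⟩ := husc
  set l : ℝ≥0∞ := Filter.liminf (phiFun F xb yb) (𝓝 yb ⊓ 𝓟 {y : Y | y ∉ F xb}) with hl
  have h1 : lopenMod F xb yb ≤ l := lopen_le_liminf F xb yb hgraph
  have h2 : l ≤ lopenMod F xb yb := liminf_le_lopen F xb yb hgraph
  have h3 : l ≤ slopeS F xb yb := liminf_le_slopeS F xb yb hgraph
  refine ⟨?_, h1.trans h3⟩
  rcases eq_or_ne l ⊤ with htop | htop
  · have : lopenMod F xb yb = ⊤ := top_le_iff.1 (htop ▸ h2)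
    rw [this]
    exact le_top
  · have hS2 : slopeS F xb yb ≤ 2 * l := by
      apply ENNReal.le_of_forall_pos_le_add
      intro δ hδ _
      set lr : ℝ := l.toReal with hlrdef
      have hlr : l = ENNReal.ofReal lr := (ENNReal.ofReal_toReal htop).symm
      have hlr0 : 0 ≤ lr := ENNReal.toReal_nonneg
      set dr : ℝ := (δ : ℝ) with hdrdef
      have hdr : 0 < dr := by exact_mod_cast hδ
      set m : ℝ := min 1 (dr / (2 * (lr + 1))) with hm
      have hm0 : 0 < m := lt_min one_pos (by positivity)
      have hm1 : m ≤ 1 := min_le_left _ _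
      have hm2 : m ≤ dr / (2 * (lr + 1)) := min_le_right _ _
      set k : ℝ := 2 + m with hk
      have hk2 : 2 < k := by linarith
      set ε : ℝ := dr / 6 with hε
      have hεpos : 0 < ε := by positivity
      have key := slopeS_le_per_k F xb yb hgraph hV hVusc htop k hk2 ε hεpos
      refine key.trans ?_
      have hreal : k * (lr + ε) ≤ 2 * lr + dr := by
        have hc : m * lr ≤ dr / 2 := by
          have ha : m * lr ≤ (dr / (2 * (lr + 1))) * lr := mul_le_mul_of_nonneg_right hm2 hlr0
          have hb : (dr / (2 * (lr + 1))) * lr ≤ dr / 2 := by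
            rw [div_mul_eq_mul_div, div_le_div_iff₀ (by positivity) (by norm_num)]
            nlinarith
          linarith
        have hd : m * ε ≤ ε := by nlinarith
        have expand : k * (lr + ε) = 2 * lr + 2 * ε + m * lr + m * ε := by rw [hk]; ring
        rw [expand, hε]
        rw [hε] at hd
        linarith
      calc ENNReal.ofReal k * (l + ENNReal.ofReal ε)
          = ENNReal.ofReal (k * (lr + ε)) := by
            rw [hlr, ← ENNReal.ofReal_add hlr0 hεpos.le, ← ENNReal.ofReal_mul (by linarith)]
        _ ≤ ENNReal.ofReal (2 * lr + dr) := ENNReal.ofReal_le_ofReal hreal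
        _ = ENNReal.ofReal (2 * lr) + ENNReal.ofReal dr :=
            ENNReal.ofReal_add (by positivity) hdr.le
        _ = 2 * l + (δ : ℝ≥0∞) := by
            rw [ENNReal.ofReal_mul (by norm_num), hlr]
            congr 1
            · norm_num
            · rw [hdrdef]
              exact ENNReal.ofReal_coe_nnreal
    rw [ENNReal.div_le_iff_le_mul (Or.inl two_ne_zero) (Or.inl ENNReal.ofNat_ne_top)]
    refine hS2.trans ?_
    rw [mul_comm]
    exact mul_le_mul_left h2 2

/-- if `Y` is complete and `y ↦ dist(xb, F⁻¹(y))` is upper semicontinuous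
near `yb`, then `S/2 ≤ lopen F (xb,yb) ≤ S`. -/
theorem slope_estimate_lopen {X Y : Type*} [MetricSpace X] [MetricSpace Y]
    [CompleteSpace Y] (F : X → Set Y) (xb : X) (yb : Y) (hgraph : yb ∈ F xb)
    (husc : ∃ V ∈ 𝓝 yb, UpperSemicontinuousOn
      (fun y : Y => EMetric.infEdist xb {x | y ∈ F x}) V) :
    slopeS F xb yb / 2 ≤ lopenMod F xb yb ∧ lopenMod F xb yb ≤ slopeS F xb yb :=
  slope_estimate_lopen' F xb yb hgraph husc
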